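/- Suppose (p, q) : ℝ → ℂ² satisfies the Hamiltonian system q' = p, p' = 2q³ + tq + θ with θ = 0, and q(t) ≠ 0 for all t. Define Q = −2^{-1/3}·p/q, P = 2^{1/3}(q² − p²/(2q²)) − s/2 and new time s = −2^{1/3} t. Then Q satisfies d²Q/ds² = 2Q³ + sQ − 1/2. -/

import Mathlib

/-- The cube root of 2. -/
noncomputable def c13 : ℝ := (2 : ℝ) ^ ((1 : ℝ) / 3)

/-- The folded variable `Q = -2^{-1/3} p/q` evaluated at `t = -s/2^{1/3}`. -/
noncomputable def foldQ (p q : ℝ → ℂ) (s : ℝ) : ℂ :=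
  -(c13 : ℂ)⁻¹ * (p (-s / c13) / q (-s / c13))

lemma c13_ne : c13 ≠ 0 := ne_of_gt (Real.rpow_pos_of_pos (by norm_num) _)

lemma c13C_ne : (c13 : ℂ) ≠ 0 := by exact_mod_cast c13_ne

lemma c13_cube : (c13 : ℂ) ^ 3 = 2 := by
  have h : c13 ^ 3 = 2 := by
    rw [c13, ← Real.rpow_natCast ((2:ℝ) ^ ((1:ℝ)/3)) 3, ← Real.rpow_mul (by norm_num)]
    norm_num
  exact_mod_cast h

/-- Folding transformation of Painlevé II with `θ = 0` to Painlevé II with `θ = -1/2`. -/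
theorem painleveII_folding (p q : ℝ → ℂ)
    (hq : ∀ t : ℝ, HasDerivAt q (p t) t)
    (hp : ∀ t : ℝ, HasDerivAt p (2 * q t ^ 3 + (t : ℂ) * q t) t)
    (hne : ∀ t : ℝ, q t ≠ 0) :
    ∃ Q' : ℝ → ℂ,
      (∀ s : ℝ, HasDerivAt (foldQ p q) (Q' s) s) ∧
      (∀ s : ℝ, HasDerivAt Q'
        (2 * (foldQ p q s) ^ 3 + (s : ℂ) * foldQ p q s - 1 / 2) s) := by
  have hk0 : (c13 : ℂ) ≠ 0 := c13C_ne
  have hk3 : (c13 : ℂ) ^ 3 = 2 := c13_cube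
  have hg : ∀ s : ℝ, HasDerivAt (fun s : ℝ => -s / c13) (-1 / c13) s := fun s =>
    (hasDerivAt_id s).neg.div_const c13
  have hqg : ∀ s : ℝ, HasDerivAt (fun s : ℝ => q (-s / c13))
      ((-1 / c13) • p (-s / c13)) s := fun s => (hq (-s / c13)).scomp s (hg s)
  have hpg : ∀ s : ℝ, HasDerivAt (fun s : ℝ => p (-s / c13))
      ((-1 / c13) • (2 * q (-s / c13) ^ 3 + ((-s / c13 : ℝ) : ℂ) * q (-s / c13))) s :=
    fun s => (hp (-s / c13)).scomp s (hg s)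
  have hts : ∀ s : ℝ, ((-s / c13 : ℝ) : ℂ) = -(s : ℂ) / c13 := fun s => by push_cast; ring
  refine ⟨fun s => ((c13 : ℂ))⁻¹ ^ 2 *
      (2 * (q (-s / c13) * q (-s / c13)) + ((-s / c13 : ℝ) : ℂ)
        - p (-s / c13) * p (-s / c13) / (q (-s / c13) * q (-s / c13))),
      ?_, ?_⟩
  · intro s
    have h1 := ((hpg s).div (hqg s) (hne (-s / c13))).const_mul (-(c13 : ℂ)⁻¹)
    have h2 : HasDerivAt (foldQ p q)
        (-(c13 : ℂ)⁻¹ *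
          (((-1 / c13) • (2 * q (-s / c13) ^ 3 + ((-s / c13 : ℝ) : ℂ) * q (-s / c13))
            * q (-s / c13) - p (-s / c13) * ((-1 / c13) • p (-s / c13))) / q (-s / c13) ^ 2)) s := h1
    convert h2 using 1
    rw [hts s]
    simp only [Complex.real_smul]
    push_cast
    set A := p (-s / c13) with hA
    set B := q (-s / c13) with hB
    have hBne : B ≠ 0 := hne _
    clear_value A B
    field_simp
    ring
  · intro s
    have hq2 := (hqg s).mul (hqg s)
    have hp2 := (hpg s).mul (hpg s)
    have hdiv := hp2.div hq2 (mul_ne_zero (hne (-s / c13)) (hne (-s / c13)))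
    have hbig := (((hq2.const_mul 2).add ((hg s).ofReal_comp)).sub hdiv).const_mul
        (((c13 : ℂ))⁻¹ ^ 2)
    convert hbig using 1
    · rfl
    · rfl
    simp only [foldQ, hts s, Complex.real_smul, Pi.mul_apply]
    push_cast
    set A := p (-s / c13) with hA
    set B := q (-s / c13) with hB
    have hBne : B ≠ 0 := hne _
    clear_value A B
    field_simp
    linear_combination (-((c13 : ℂ) * B ^ 3) - 2 * A * B ^ 2 * (s : ℂ)) * hk3
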